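/- arXiv:1310.7539 — 2 statements merged into one kernel-verified Lean document; each statement's English description precedes it below -/
import Mathlib

section
/- The set of coinvariants {x ∈ O_q(B⁺) : θ⁺(x) = 1 ⊗ x} equals the subalgebra O_q(N⁺) generated by the elements X_{ii}⁻¹X_{ij} (1 ≤ i < j ≤ n+1); likewise {x ∈ O_q(B⁻) : θ⁻(x) = 1 ⊗ x} equals the subalgebra O_q(N⁻) generated by the elements X_{jj}⁻¹X_{ji} (1 ≤ i < j ≤ n+1). -/
open scoped TensorProduct

noncomputable section

namespace QSL

/-- The generator `X i j` of the free algebra underlying `O_q(SL_{n+1})`. -/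
def Xf (k : Type) [Field k] (n : ℕ) (i j : Fin (n+1)) :
    FreeAlgebra k (Fin (n+1) × Fin (n+1)) :=
  FreeAlgebra.ι k (i, j)

/-- The number of inversions (the length `ℓ(σ)`) of a permutation. -/
def invCount {m : ℕ} (σ : Equiv.Perm (Fin m)) : ℕ :=
  (Finset.univ.filter (fun p : Fin m × Fin m => p.1 < p.2 ∧ σ p.2 < σ p.1)).card

/-- The quantum determinant `∑_σ (-q)^{ℓ(σ)} X_{1σ(1)} ⋯ X_{n+1,σ(n+1)}`. -/
def qdet (k : Type) [Field k] (q : k) (n : ℕ) : FreeAlgebra k (Fin (n+1) × Fin (n+1)) :=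
  ∑ σ : Equiv.Perm (Fin (n+1)),
    ((-q) ^ invCount σ) • (List.ofFn fun i => Xf k n i (σ i)).prod

/-- Defining relations of `O_q(SL_{n+1})`. -/
inductive SLRel (k : Type) [Field k] (q : k) (n : ℕ) :
    FreeAlgebra k (Fin (n+1) × Fin (n+1)) → FreeAlgebra k (Fin (n+1) × Fin (n+1)) → Prop
  | row {i j m : Fin (n+1)} (h : j < m) :
      SLRel k q n (Xf k n i j * Xf k n i m) (q • (Xf k n i m * Xf k n i j))
  | col {i l j : Fin (n+1)} (h : i < l) :
      SLRel k q n (Xf k n i j * Xf k n l j) (q • (Xf k n l j * Xf k n i j))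
  | swap {i l j m : Fin (n+1)} (h1 : i < l) (h2 : m < j) :
      SLRel k q n (Xf k n i j * Xf k n l m) (Xf k n l m * Xf k n i j)
  | mixed {i l j m : Fin (n+1)} (h1 : i < l) (h2 : j < m) :
      SLRel k q n (Xf k n i j * Xf k n l m)
        (Xf k n l m * Xf k n i j + (q - q⁻¹) • (Xf k n i m * Xf k n l j))
  | det : SLRel k q n (qdet k q n) 1

/-- The quantized coordinate ring `O_q(SL_{n+1})`. -/
abbrev OqSL (k : Type) [Field k] (q : k) (n : ℕ) := RingQuot (SLRel k q n)

/-- The generator `X i j` of `O_q(SL_{n+1})`. -/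
def XSL (k : Type) [Field k] (q : k) (n : ℕ) (i j : Fin (n+1)) : OqSL k q n :=
  RingQuot.mkAlgHom k (SLRel k q n) (Xf k n i j)

/-- Relations `X i j = 0` for `i > j`, defining `O_q(B⁺)`. -/
inductive BpRel (k : Type) [Field k] (q : k) (n : ℕ) : OqSL k q n → OqSL k q n → Prop
  | zero {i j : Fin (n+1)} (h : j < i) : BpRel k q n (XSL k q n i j) 0

/-- Relations `X i j = 0` for `i < j`, defining `O_q(B⁻)`. -/
inductive BmRel (k : Type) [Field k] (q : k) (n : ℕ) : OqSL k q n → OqSL k q n → Prop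
  | zero {i j : Fin (n+1)} (h : i < j) : BmRel k q n (XSL k q n i j) 0

/-- Relations `X i j = 0` for `i ≠ j`, defining `O_q(T)`. -/
inductive TRel (k : Type) [Field k] (q : k) (n : ℕ) : OqSL k q n → OqSL k q n → Prop
  | zero {i j : Fin (n+1)} (h : i ≠ j) : TRel k q n (XSL k q n i j) 0

/-- The quantized coordinate ring `O_q(B⁺)` of the positive Borel. -/
abbrev OqBp (k : Type) [Field k] (q : k) (n : ℕ) := RingQuot (BpRel k q n)

/-- The quantized coordinate ring `O_q(B⁻)` of the negative Borel. -/
abbrev OqBm (k : Type) [Field k] (q : k) (n : ℕ) := RingQuot (BmRel k q n)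

/-- The quantized coordinate ring `O_q(T)` of the maximal torus. -/
abbrev OqT (k : Type) [Field k] (q : k) (n : ℕ) := RingQuot (TRel k q n)

/-- The coset of `X i j` in `O_q(B⁺)`. -/
def XBp (k : Type) [Field k] (q : k) (n : ℕ) (i j : Fin (n+1)) : OqBp k q n :=
  RingQuot.mkAlgHom k (BpRel k q n) (XSL k q n i j)

/-- The coset of `X i j` in `O_q(B⁻)`. -/
def XBm (k : Type) [Field k] (q : k) (n : ℕ) (i j : Fin (n+1)) : OqBm k q n :=
  RingQuot.mkAlgHom k (BmRel k q n) (XSL k q n i j)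

/-- The coset `Y i i` of `X i i` in `O_q(T)`. -/
def YT (k : Type) [Field k] (q : k) (n : ℕ) (i : Fin (n+1)) : OqT k q n :=
  RingQuot.mkAlgHom k (TRel k q n) (XSL k q n i i)

/-- `y i j = X_{ii}⁻¹ X_{ij}` in `O_q(B⁺)`. -/
def yY (k : Type) [Field k] (q : k) (n : ℕ) (i j : Fin (n+1)) : OqBp k q n :=
  Ring.inverse (XBp k q n i i) * XBp k q n i j

/-- `z i j = X_{ij} X_{jj}⁻¹` in `O_q(B⁺)`. -/
def zZ (k : Type) [Field k] (q : k) (n : ℕ) (i j : Fin (n+1)) : OqBp k q n :=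
  XBp k q n i j * Ring.inverse (XBp k q n j j)

/-- The subalgebra `O_q(N⁺)` of `O_q(B⁺)`, generated by the `X_{ii}⁻¹X_{ij}`, `i < j`. -/
def OqNp (k : Type) [Field k] (q : k) (n : ℕ) : Subalgebra k (OqBp k q n) :=
  Algebra.adjoin k {a | ∃ i j : Fin (n+1), i < j ∧ a = yY k q n i j}

/-- The subalgebra `O_q(N⁺)'` of `O_q(B⁺)`, generated by the `X_{ij}X_{jj}⁻¹`, `i < j`. -/
def OqNp' (k : Type) [Field k] (q : k) (n : ℕ) : Subalgebra k (OqBp k q n) :=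
  Algebra.adjoin k {a | ∃ i j : Fin (n+1), i < j ∧ a = zZ k q n i j}

/-- `X_{jj}⁻¹ X_{ji}` in `O_q(B⁻)` (for `i < j`). -/
def yNm (k : Type) [Field k] (q : k) (n : ℕ) (i j : Fin (n+1)) : OqBm k q n :=
  Ring.inverse (XBm k q n j j) * XBm k q n j i

/-- `X_{ji} X_{ii}⁻¹` in `O_q(B⁻)` (for `i < j`). -/
def zNm (k : Type) [Field k] (q : k) (n : ℕ) (i j : Fin (n+1)) : OqBm k q n :=
  XBm k q n j i * Ring.inverse (XBm k q n i i)

/-- The subalgebra `O_q(N⁻)` of `O_q(B⁻)`, generated by the `X_{jj}⁻¹X_{ji}`, `i < j`. -/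
def OqNm (k : Type) [Field k] (q : k) (n : ℕ) : Subalgebra k (OqBm k q n) :=
  Algebra.adjoin k {a | ∃ i j : Fin (n+1), i < j ∧ a = yNm k q n i j}

/-- The subalgebra `O_q(N⁻)'` of `O_q(B⁻)`, generated by the `X_{ji}X_{ii}⁻¹`, `i < j`. -/
def OqNm' (k : Type) [Field k] (q : k) (n : ℕ) : Subalgebra k (OqBm k q n) :=
  Algebra.adjoin k {a | ∃ i j : Fin (n+1), i < j ∧ a = zNm k q n i j}

/-! ### Auxiliary development -/

section PermAux
variable {m : ℕ}

lemma perm_eq_one_of_le (σ : Equiv.Perm (Fin m)) (h : ∀ i, i ≤ σ i) : σ = 1 := by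
  have hsum : ∑ i : Fin m, ((σ i : ℤ) - (i : ℤ)) = 0 := by
    rw [Finset.sum_sub_distrib, sub_eq_zero]
    exact Equiv.sum_comp σ (fun i => (i : ℤ))
  have hz := (Finset.sum_eq_zero_iff_of_nonneg (fun i _ => by
      have := h i
      simp only [sub_nonneg, Int.ofNat_le]
      exact_mod_cast this)).mp hsum
  ext i
  have h1 := hz i (Finset.mem_univ i)
  have h2 : ((σ i : ℤ)) = (i : ℤ) := by linarith
  exact_mod_cast h2

lemma perm_exists_lt (σ : Equiv.Perm (Fin m)) (hσ : σ ≠ 1) : ∃ i, σ i < i := by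
  by_contra hc
  push_neg at hc
  exact hσ (perm_eq_one_of_le σ (fun i => hc i))

lemma perm_exists_gt (σ : Equiv.Perm (Fin m)) (hσ : σ ≠ 1) : ∃ i, i < σ i := by
  obtain ⟨i, hi⟩ := perm_exists_lt σ⁻¹ (by simpa using hσ)
  exact ⟨σ⁻¹ i, by simpa using hi⟩

lemma perm_exists_ne (σ : Equiv.Perm (Fin m)) (hσ : σ ≠ 1) : ∃ i, σ i ≠ i := by
  obtain ⟨i, hi⟩ := perm_exists_lt σ hσ
  exact ⟨i, hi.ne⟩

end PermAux

section RingAux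
variable {A : Type} [Ring A]

lemma list_unit {a : A} {L : List A} (hmem : a ∈ L)
    (hcomm : ∀ x ∈ L, ∀ y ∈ L, Commute x y) (hprod : L.prod = 1) : IsUnit a := by
  letI := Classical.decEq A
  have hpc : L.Pairwise Commute := by
    rw [List.pairwise_iff_forall_sublist]
    intro x y hs
    have hx : x ∈ L := hs.subset (by simp)
    have hy : y ∈ L := hs.subset (by simp)
    exact hcomm x hx y hy
  have hperm := List.perm_cons_erase hmem
  have h2 : a * (L.erase a).prod = 1 := by
    rw [← List.prod_cons, ← hperm.prod_eq' hpc, hprod]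
  have hca : Commute a ((L.erase a).prod) :=
    Commute.list_prod_right _ _ (fun y hy => hcomm a hmem y (List.mem_of_mem_erase hy))
  exact ⟨⟨a, (L.erase a).prod, h2, by rw [← hca, h2]⟩, rfl⟩

lemma inv_comm {u a : A} (hu : IsUnit u) (h : u * a = a * u) :
    Ring.inverse u * a = a * Ring.inverse u := by
  have h2 := Ring.mul_inverse_cancel u hu
  have h1 := Ring.inverse_mul_cancel u hu
  calc Ring.inverse u * a
      = Ring.inverse u * a * (u * Ring.inverse u) := by rw [h2, mul_one]
    _ = Ring.inverse u * (a * u) * Ring.inverse u := by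
        simp only [mul_assoc]
    _ = Ring.inverse u * (u * a) * Ring.inverse u := by rw [← h]
    _ = a * Ring.inverse u := by rw [← mul_assoc, h1, one_mul]

lemma list_sum_apply {n : ℕ} (t : Fin n) (L : List (Fin n → ℤ)) :
    L.sum t = (L.map fun f => f t).sum := by
  induction L with
  | nil => rfl
  | cons a L ih => simp [ih]

lemma list_sum_indicator {m : ℕ} (c : Fin m) (L : List (Fin m)) :
    (L.map fun l => if c = l then (1:ℤ) else 0).sum = L.count c := by
  induction L with
  | nil => simp
  | cons a L ih =>
      simp only [List.map_cons, List.sum_cons, ih, List.count_cons]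
      by_cases h : a = c
      · subst h; simp [add_comm]
      · rw [if_neg (fun hh => h hh.symm), if_neg (by simpa [beq_iff_eq] using h)]
        push_cast
        ring

lemma list_sum_sub {α : Type} (f g : α → ℤ) (L : List α) :
    (L.map fun a => f a - g a).sum = (L.map f).sum - (L.map g).sum := by
  induction L with
  | nil => simp
  | cons a L ih => simp [ih]; ring

end RingAux

section Generic
variable {k : Type} [Field k] {q : k} {n : ℕ}
variable {A : Type} [Ring A] [Algebra k A]
variable (F : FreeAlgebra k (Fin (n+1) × Fin (n+1)) →ₐ[k] A)
variable (hF : ∀ ⦃a b⦄, SLRel k q n a b → F a = F b)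

include hF

lemma gen_row {i j m : Fin (n+1)} (h : j < m) :
    F (Xf k n i j) * F (Xf k n i m) = q • (F (Xf k n i m) * F (Xf k n i j)) := by
  have := hF (SLRel.row (i := i) h)
  simpa [map_mul, map_smul] using this

lemma gen_col {i l j : Fin (n+1)} (h : i < l) :
    F (Xf k n i j) * F (Xf k n l j) = q • (F (Xf k n l j) * F (Xf k n i j)) := by
  have := hF (SLRel.col (j := j) h)
  simpa [map_mul, map_smul] using this

lemma gen_swap {i l j m : Fin (n+1)} (h1 : i < l) (h2 : m < j) :
    F (Xf k n i j) * F (Xf k n l m) = F (Xf k n l m) * F (Xf k n i j) := by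
  have := hF (SLRel.swap h1 h2)
  simpa [map_mul] using this

lemma gen_mixed {i l j m : Fin (n+1)} (h1 : i < l) (h2 : j < m) :
    F (Xf k n i j) * F (Xf k n l m)
      = F (Xf k n l m) * F (Xf k n i j)
        + (q - q⁻¹) • (F (Xf k n i m) * F (Xf k n l j)) := by
  have := hF (SLRel.mixed h1 h2)
  simpa [map_mul, map_add, map_smul] using this

lemma gen_det :
    (∑ σ : Equiv.Perm (Fin (n+1)),
      ((-q) ^ invCount σ) • (List.ofFn fun i => F (Xf k n i (σ i))).prod) = 1 := by
  have := hF SLRel.det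
  rw [map_one] at this
  rw [← this, qdet, map_sum]
  congr 1; funext σ
  rw [map_smul, map_list_prod, List.map_ofFn]
  rfl

omit hF in
lemma invCount_one : invCount (1 : Equiv.Perm (Fin (n+1))) = 0 := by
  rw [invCount, Finset.card_eq_zero, Finset.filter_eq_empty_iff]
  rintro p -
  simp only [Equiv.Perm.one_apply]
  rintro ⟨h1, h2⟩
  exact absurd h2 (not_lt.2 h1.le)

lemma gen_diag_prod
    (hvan : ∀ σ : Equiv.Perm (Fin (n+1)), σ ≠ 1 → ∃ i, (F (Xf k n i (σ i)) : A) = 0) :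
    (List.ofFn fun i => (F (Xf k n i i) : A)).prod = 1 := by
  have hd := gen_det F hF
  rw [Finset.sum_eq_single (1 : Equiv.Perm (Fin (n+1)))] at hd
  · rw [invCount_one, pow_zero, one_smul] at hd
    simpa [Equiv.Perm.one_apply] using hd
  · intro σ _ hσ
    obtain ⟨i, hi⟩ := hvan σ hσ
    have : (0 : A) ∈ List.ofFn fun i => (F (Xf k n i (σ i)) : A) := by
      rw [List.mem_ofFn]; exact ⟨i, hi⟩
    rw [List.prod_eq_zero this, smul_zero]
  · intro h; exact absurd (Finset.mem_univ _) h

lemma gen_diag_commute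
    (hcorr : ∀ i j : Fin (n+1), i < j → F (Xf k n i j) * F (Xf k n j i) = 0)
    (i j : Fin (n+1)) : Commute (F (Xf k n i i)) (F (Xf k n j j)) := by
  rcases lt_trichotomy i j with h | h | h
  · have := gen_mixed F hF h h
    rw [hcorr i j h, smul_zero, add_zero] at this
    exact this
  · subst h; rfl
  · have := gen_mixed F hF h h
    rw [hcorr j i h, smul_zero, add_zero] at this
    exact this.symm

lemma gen_diag_isUnit
    (hvan : ∀ σ : Equiv.Perm (Fin (n+1)), σ ≠ 1 → ∃ i, (F (Xf k n i (σ i)) : A) = 0)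
    (hcorr : ∀ i j : Fin (n+1), i < j → F (Xf k n i j) * F (Xf k n j i) = 0)
    (i : Fin (n+1)) : IsUnit (F (Xf k n i i)) := by
  refine list_unit (L := List.ofFn fun i => (F (Xf k n i i) : A)) ?_ ?_
    (gen_diag_prod F hF hvan)
  · rw [List.mem_ofFn]; exact ⟨i, rfl⟩
  · intro a ha b hb
    rw [List.mem_ofFn] at ha hb
    obtain ⟨ia, rfl⟩ := ha
    obtain ⟨ib, rfl⟩ := hb
    exact gen_diag_commute F hF hcorr ia ib

end Generic

section Tside
variable {k : Type} [Field k] {q : k} {n : ℕ}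

/-- The weight vector attached to an index. -/
def ee (n : ℕ) (i : Fin (n+1)) : Fin n → ℤ :=
  fun t => (if t.castSucc = i then 1 else 0) - (if t.succ = i then 1 else 0)

lemma sum_ee (n : ℕ) : ∑ i : Fin (n+1), ee n i = 0 := by
  funext t
  simp only [Finset.sum_apply, ee, Pi.zero_apply, Finset.sum_sub_distrib]
  rw [Finset.sum_ite_eq Finset.univ t.castSucc (fun _ => (1:ℤ)),
    Finset.sum_ite_eq Finset.univ t.succ (fun _ => (1:ℤ))]
  simp

/-- The Laurent polynomial ring (group algebra of `ℤⁿ`). -/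
abbrev Rr (k : Type) [Field k] (n : ℕ) := AddMonoidAlgebra k (Fin n → ℤ)

lemma single_list_prod (L : List (Fin (n+1))) :
    (L.map fun l => (AddMonoidAlgebra.single (ee n l) 1 : Rr k n)).prod
      = AddMonoidAlgebra.single ((L.map (ee n)).sum) 1 := by
  induction L with
  | nil => simp [AddMonoidAlgebra.one_def]
  | cons a L ih =>
      simp only [List.map_cons, List.prod_cons, List.sum_cons, ih,
        AddMonoidAlgebra.single_mul_single, one_mul]

/-- The map from the free algebra to the Laurent ring. -/
def f0 (k : Type) [Field k] (n : ℕ) :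
    FreeAlgebra k (Fin (n+1) × Fin (n+1)) →ₐ[k] Rr k n :=
  FreeAlgebra.lift k fun p =>
    if p.1 = p.2 then AddMonoidAlgebra.single (ee n p.1) 1 else 0

lemma f0_Xf (i j : Fin (n+1)) :
    f0 k n (Xf k n i j)
      = if i = j then AddMonoidAlgebra.single (ee n i) 1 else 0 := by
  rw [Xf, f0, FreeAlgebra.lift_ι_apply]

lemma f0_rel : ∀ ⦃a b⦄, SLRel k q n a b → f0 k n a = f0 k n b := by
  intro a b h
  induction h with
  | @row i j m h =>
      rw [map_mul, map_smul, map_mul, f0_Xf, f0_Xf]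
      by_cases hij : i = j
      · rw [if_neg (show ¬ i = m by rintro rfl; subst hij; exact absurd h (lt_irrefl _))]
        simp
      · rw [if_neg hij]; simp
  | @col i l j h =>
      rw [map_mul, map_smul, map_mul, f0_Xf, f0_Xf]
      by_cases hij : i = j
      · rw [if_neg (show ¬ l = j by rintro rfl; subst hij; exact absurd h (lt_irrefl _))]
        simp
      · rw [if_neg hij]; simp
  | @swap i l j m h1 h2 =>
      rw [map_mul, map_mul]
      exact mul_comm _ _
  | @mixed i l j m h1 h2 =>
      rw [map_mul, map_add, map_mul, map_smul, map_mul]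
      have him : ¬ (i = m ∧ l = j) := by
        rintro ⟨rfl, rfl⟩
        exact absurd (h1.trans h2) (lt_irrefl _)
      have hz : f0 k n (Xf k n i m) * f0 k n (Xf k n l j) = 0 := by
        rw [f0_Xf, f0_Xf]
        by_cases h : i = m
        · rw [if_neg (fun hlj => him ⟨h, hlj⟩), mul_zero]
        · rw [if_neg h, zero_mul]
      rw [hz, smul_zero, add_zero]
      exact mul_comm _ _
  | det =>
      rw [map_one, qdet, map_sum]
      rw [Finset.sum_eq_single (1 : Equiv.Perm (Fin (n+1)))]
      · rw [map_smul, map_list_prod, List.map_ofFn, invCount_one, pow_zero, one_smul]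
        have h1 : (List.ofFn ((f0 k n) ∘ fun i => Xf k n i ((1 : Equiv.Perm (Fin (n+1))) i)))
            = (List.finRange (n+1)).map fun l =>
                (AddMonoidAlgebra.single (ee n l) 1 : Rr k n) := by
          rw [List.ofFn_eq_map]
          refine List.map_congr_left ?_
          intro i _
          simp [Function.comp, f0_Xf]
        rw [h1, single_list_prod]
        have h2 : ((List.finRange (n+1)).map (ee n)).sum = 0 := by
          rw [← List.ofFn_eq_map, List.sum_ofFn, sum_ee]
        rw [h2]
        exact (AddMonoidAlgebra.one_def).symm
      · intro σ _ hσ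
        obtain ⟨i, hi⟩ := perm_exists_ne σ hσ
        rw [map_smul, map_list_prod, List.map_ofFn]
        have hz : (0 : Rr k n) ∈ List.ofFn ((f0 k n) ∘ fun i => Xf k n i (σ i)) := by
          rw [List.mem_ofFn]
          exact ⟨i, by rw [Function.comp_apply, f0_Xf, if_neg (fun h => hi h.symm)]⟩
        rw [List.prod_eq_zero hz, smul_zero]
      · intro h; exact absurd (Finset.mem_univ _) h

/-- The composite projection of the free algebra onto `O_q(T)`. -/
def FT (k : Type) [Field k] (q : k) (n : ℕ) :
    FreeAlgebra k (Fin (n+1) × Fin (n+1)) →ₐ[k] OqT k q n :=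
  (RingQuot.mkAlgHom k (TRel k q n)).comp (RingQuot.mkAlgHom k (SLRel k q n))

lemma FT_rel : ∀ ⦃a b⦄, SLRel k q n a b → FT k q n a = FT k q n b := by
  intro a b h
  exact congrArg (RingQuot.mkAlgHom k (TRel k q n)) (RingQuot.mkAlgHom_rel k h)

lemma YT_eq (i : Fin (n+1)) : YT k q n i = FT k q n (Xf k n i i) := rfl

lemma FT_offdiag {i j : Fin (n+1)} (h : i ≠ j) : FT k q n (Xf k n i j) = 0 := by
  have h1 := RingQuot.mkAlgHom_rel k (TRel.zero (k := k) (q := q) (n := n) h)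
  rw [map_zero] at h1
  exact h1

set_option maxHeartbeats 1000000 in
lemma YT_isUnit (i : Fin (n+1)) : IsUnit (YT k q n i) := by
  have hvan : ∀ σ : Equiv.Perm (Fin (n+1)), σ ≠ 1 →
      ∃ i, (FT k q n (Xf k n i (σ i)) : OqT k q n) = 0 := by
    intro σ hσ
    obtain ⟨i, hi⟩ := perm_exists_ne σ hσ
    exact ⟨i, FT_offdiag (fun h => hi h.symm)⟩
  have hcorr : ∀ i j : Fin (n+1), i < j →
      FT k q n (Xf k n i j) * FT k q n (Xf k n j i) = 0 := by
    intro i j h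
    rw [FT_offdiag h.ne, zero_mul]
  exact @gen_diag_isUnit k _ q n (OqT k q n) _ _ (FT k q n)
    (fun a b h => FT_rel h) hvan hcorr i

/-- The projection from `O_q(T)` onto the Laurent ring. -/
def phiT (k : Type) [Field k] (q : k) (n : ℕ) : OqT k q n →ₐ[k] Rr k n :=
  RingQuot.liftAlgHom k ⟨RingQuot.liftAlgHom k ⟨f0 k n, f0_rel⟩, by
    intro a b h
    induction h with
    | @zero i j hij =>
        rw [map_zero, XSL, RingQuot.liftAlgHom_mkAlgHom_apply, f0_Xf, if_neg hij]⟩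

lemma phiT_Y (i : Fin (n+1)) :
    phiT k q n (YT k q n i) = AddMonoidAlgebra.single (ee n i) 1 := by
  rw [YT, XSL, phiT, RingQuot.liftAlgHom_mkAlgHom_apply, RingQuot.liftAlgHom_mkAlgHom_apply,
    f0_Xf, if_pos rfl]

end Tside

section Main
variable {k : Type} [Field k] {q : k} {n : ℕ}
variable {A : Type} [Ring A] [Algebra k A]

/-- Ordered product of diagonal generators along a list of indices. -/
def PLst (x : Fin (n+1) → A) (L : List (Fin (n+1))) : A := (L.map x).prod

/-- Total weight of a list of indices. -/
def wL (n : ℕ) (L : List (Fin (n+1))) : Fin n → ℤ := (L.map (ee n)).sum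

lemma PLst_nil (x : Fin (n+1) → A) : PLst x [] = 1 := rfl

lemma PLst_cons (x : Fin (n+1) → A) (l : Fin (n+1)) (L : List (Fin (n+1))) :
    PLst x (l :: L) = x l * PLst x L := by
  simp [PLst]

lemma PLst_single (x : Fin (n+1) → A) (l : Fin (n+1)) : PLst x [l] = x l := by
  simp [PLst]

lemma PLst_append (x : Fin (n+1) → A) (L1 L2 : List (Fin (n+1))) :
    PLst x (L1 ++ L2) = PLst x L1 * PLst x L2 := by
  simp [PLst]

lemma wL_nil : wL n [] = 0 := rfl

lemma wL_single (l : Fin (n+1)) : wL n [l] = ee n l := by simp [wL]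

lemma wL_append (L1 L2 : List (Fin (n+1))) :
    wL n (L1 ++ L2) = wL n L1 + wL n L2 := by
  simp [wL]

variable (x : Fin (n+1) → A) (Ygen : Set A)

/-- The weight-space submodules. -/
def CC (x : Fin (n+1) → A) (Ygen : Set A) (g : Fin n → ℤ) : Submodule k A :=
  Submodule.span k
    {a | ∃ m ∈ Algebra.adjoin k Ygen, ∃ L, wL n L = g ∧ a = m * PLst x L}

lemma sw_x (HSw : ∀ l, ∀ a ∈ Ygen, ∃ c : k, x l * a = c • (a * x l)) (l : Fin (n+1)) :
    ∀ a ∈ Algebra.adjoin k Ygen,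
      ∃ b ∈ Algebra.adjoin k Ygen, x l * a = b * x l := by
  intro a ha
  induction ha using Algebra.adjoin_induction with
  | mem y hy =>
      obtain ⟨c, hc⟩ := HSw l y hy
      exact ⟨c • y, Subalgebra.smul_mem _ (Algebra.subset_adjoin hy) c,
        by rw [hc, smul_mul_assoc]⟩
  | algebraMap r =>
      exact ⟨algebraMap k A r, Subalgebra.algebraMap_mem _ r,
        (Algebra.commutes r (x l)).symm⟩
  | add y z hy hz ihy ihz =>
      obtain ⟨b1, hb1, e1⟩ := ihy
      obtain ⟨b2, hb2, e2⟩ := ihz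
      exact ⟨b1 + b2, add_mem hb1 hb2, by rw [mul_add, e1, e2, add_mul]⟩
  | mul y z hy hz ihy ihz =>
      obtain ⟨b1, hb1, e1⟩ := ihy
      obtain ⟨b2, hb2, e2⟩ := ihz
      exact ⟨b1 * b2, mul_mem hb1 hb2, by
        rw [← mul_assoc, e1, mul_assoc, e2, ← mul_assoc]⟩

lemma sw_P (HSw : ∀ l, ∀ a ∈ Ygen, ∃ c : k, x l * a = c • (a * x l))
    (L : List (Fin (n+1))) :
    ∀ a ∈ Algebra.adjoin k Ygen,
      ∃ b ∈ Algebra.adjoin k Ygen, PLst x L * a = b * PLst x L := by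
  induction L with
  | nil => exact fun a ha => ⟨a, ha, by rw [PLst_nil, one_mul, mul_one]⟩
  | cons l L ih =>
      intro a ha
      obtain ⟨b1, hb1, e1⟩ := ih a ha
      obtain ⟨b2, hb2, e2⟩ := sw_x x Ygen HSw l b1 hb1
      refine ⟨b2, hb2, ?_⟩
      rw [PLst_cons, mul_assoc, e1, ← mul_assoc, e2, mul_assoc]

lemma CC_mul (HSw : ∀ l, ∀ a ∈ Ygen, ∃ c : k, x l * a = c • (a * x l))
    {g g' : Fin n → ℤ} {a b : A} (ha : a ∈ CC (k := k) x Ygen g)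
    (hb : b ∈ CC (k := k) x Ygen g') : a * b ∈ CC (k := k) x Ygen (g + g') := by
  induction hb using Submodule.span_induction with
  | mem b hbgen =>
      induction ha using Submodule.span_induction with
      | mem a hagen =>
          obtain ⟨m1, hm1, L1, hw1, rfl⟩ := hagen
          obtain ⟨m2, hm2, L2, hw2, rfl⟩ := hbgen
          obtain ⟨b3, hb3, e3⟩ := sw_P x Ygen HSw L1 m2 hm2
          refine Submodule.subset_span
            ⟨m1 * b3, mul_mem hm1 hb3, L1 ++ L2, by rw [wL_append, hw1, hw2],
              ?_⟩
          rw [PLst_append, ← mul_assoc, ← mul_assoc, mul_assoc m1, mul_assoc m1, e3,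
            ← mul_assoc, ← mul_assoc]
      | zero => rw [zero_mul]; exact zero_mem _
      | add y z hy hz ihy ihz => rw [add_mul]; exact add_mem ihy ihz
      | smul c y hy ihy => rw [smul_mul_assoc]; exact Submodule.smul_mem _ c ihy
  | zero => rw [mul_zero]; exact zero_mem _
  | add y z hy hz ihy ihz => rw [mul_add]; exact add_mem ihy ihz
  | smul c y hy ihy => rw [mul_smul_comm]; exact Submodule.smul_mem _ c ihy

lemma CC_top (HSw : ∀ l, ∀ a ∈ Ygen, ∃ c : k, x l * a = c • (a * x l))
    (Gset : Set A) (Hgen : Algebra.adjoin k Gset = ⊤)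
    (Hg : ∀ g ∈ Gset, ∃ m ∈ Algebra.adjoin k Ygen,
      (∃ l, g = m * x l) ∨ g = m) :
    (⨆ g, CC (k := k) x Ygen g) = ⊤ := by
  have hone : (1 : A) ∈ ⨆ g, CC (k := k) x Ygen g :=
    Submodule.mem_iSup_of_mem 0 (Submodule.subset_span
      ⟨1, one_mem _, [], wL_nil, by rw [PLst_nil, one_mul]⟩)
  have hmul : ∀ a b : A, a ∈ (⨆ g, CC (k := k) x Ygen g) →
      b ∈ (⨆ g, CC (k := k) x Ygen g) → a * b ∈ ⨆ g, CC (k := k) x Ygen g := by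
    intro a b ha hb
    refine Submodule.iSup_induction (motive := fun a => a * b ∈ ⨆ g, CC (k := k) x Ygen g)
      _ ha ?_ (by show (0:A) * b ∈ _; rw [zero_mul]; exact zero_mem _)
      (fun y z hy hz => by show (y + z) * b ∈ _; rw [add_mul]; exact add_mem hy hz)
    intro g a hag
    refine Submodule.iSup_induction (motive := fun b => a * b ∈ ⨆ g, CC (k := k) x Ygen g)
      _ hb ?_ (by show a * (0:A) ∈ _; rw [mul_zero]; exact zero_mem _)
      (fun y z hy hz => by show a * (y + z) ∈ _; rw [mul_add]; exact add_mem hy hz)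
    intro g' b hbg
    exact Submodule.mem_iSup_of_mem (g + g') (CC_mul x Ygen HSw hag hbg)
  rw [eq_top_iff]
  intro y _
  let S : Subalgebra k A := Submodule.toSubalgebra _ hone hmul
  have hG : Gset ⊆ (S : Set A) := by
    intro g hg
    obtain ⟨m, hm, hcase⟩ := Hg g hg
    rcases hcase with ⟨l, rfl⟩ | h2
    · exact Submodule.mem_iSup_of_mem (ee n l) (Submodule.subset_span
        ⟨m, hm, [l], wL_single l, by rw [PLst_single]⟩)
    · exact Submodule.mem_iSup_of_mem 0 (Submodule.subset_span
        ⟨m, hm, [], wL_nil, by rw [PLst_nil, mul_one]; exact h2⟩)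
  have htop : (⊤ : Subalgebra k A) ≤ S := Hgen ▸ Algebra.adjoin_le hG
  exact htop (Algebra.mem_top)

lemma count_eq_of_w_zero {L : List (Fin (n+1))} (hw : wL n L = 0) (l : Fin (n+1)) :
    L.count l = L.count 0 := by
  have hcnt : ∀ t : Fin n, (L.count t.castSucc : ℤ) = L.count t.succ := by
    intro t
    have h1 : wL n L t = 0 := by rw [hw]; rfl
    rw [wL, list_sum_apply, List.map_map] at h1
    have h3 : (L.map fun l => ee n l t).sum = 0 := h1
    simp only [ee] at h3
    rw [list_sum_sub (fun l => if t.castSucc = l then (1:ℤ) else 0)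
      (fun l => if t.succ = l then (1:ℤ) else 0) L, list_sum_indicator,
      list_sum_indicator, sub_eq_zero] at h3
    exact h3
  obtain ⟨v, hv⟩ := l
  induction v with
  | zero => rfl
  | succ s ih =>
      have hs : s < n := by omega
      have hsn : s < n + 1 := by omega
      have h4 := hcnt ⟨s, hs⟩
      have h5 : (⟨s, hs⟩ : Fin n).castSucc = ⟨s, hsn⟩ := rfl
      have h6 : (⟨s, hs⟩ : Fin n).succ = ⟨s + 1, hv⟩ := rfl
      rw [h5, h6] at h4
      have h7 : L.count (⟨s + 1, hv⟩ : Fin (n+1)) = L.count ⟨s, hsn⟩ := by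
        exact_mod_cast h4.symm
      rw [h7, ih hsn]

lemma PLst_eq_one (Hcomm : ∀ i j, Commute (x i) (x j))
    (Hprod : (List.ofFn x).prod = 1)
    {L : List (Fin (n+1))} (hw : wL n L = 0) : PLst x L = 1 := by
  classical
  set m := L.count 0 with hm
  set LL := (List.replicate m (List.finRange (n+1))).flatten with hLL
  have hperm : L.Perm LL := by
    rw [List.perm_iff_count]
    intro a
    have h1 : LL.count a = m := by
      rw [hLL, List.count_flatten, List.map_replicate, List.sum_replicate, smul_eq_mul,
        List.count_eq_one_of_mem (List.nodup_finRange (n+1)) (List.mem_finRange a), mul_one]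
    rw [h1, hm, count_eq_of_w_zero hw a]
  have hpc : (L.map x).Pairwise Commute := by
    rw [List.pairwise_iff_forall_sublist]
    intro a b hs
    have ha : a ∈ L.map x := hs.subset (by simp)
    have hb : b ∈ L.map x := hs.subset (by simp)
    obtain ⟨ia, _, rfl⟩ := List.mem_map.1 ha
    obtain ⟨ib, _, rfl⟩ := List.mem_map.1 hb
    exact Hcomm ia ib
  have h2 : PLst x L = PLst x LL := (hperm.map x).prod_eq' hpc
  rw [h2, PLst, hLL, List.map_flatten, List.map_replicate, List.prod_flatten,
    List.map_replicate, ← List.ofFn_eq_map, Hprod, List.prod_replicate, one_pow]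

lemma CC_zero_le (Hcomm : ∀ i j, Commute (x i) (x j))
    (Hprod : (List.ofFn x).prod = 1) :
    CC (k := k) x Ygen 0 ≤ Subalgebra.toSubmodule (Algebra.adjoin k Ygen) := by
  rw [CC, Submodule.span_le]
  rintro a ⟨m, hm, L, hw, rfl⟩
  rw [PLst_eq_one x Hcomm Hprod hw, mul_one]
  exact hm

end Main

section Theta
variable {k : Type} [Field k] {q : k} {n : ℕ}
variable {A : Type} [Ring A] [Algebra k A]
variable (x : Fin (n+1) → A) (Ygen : Set A)
variable (θ : A →ₐ[k] OqT k q n ⊗[k] A)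

lemma theta_inv (l : Fin (n+1)) (Hθd : θ (x l) = YT k q n l ⊗ₜ[k] x l)
    (hu : IsUnit (x l)) :
    θ (Ring.inverse (x l)) = Ring.inverse (YT k q n l) ⊗ₜ[k] Ring.inverse (x l) := by
  have hY := YT_isUnit (k := k) (q := q) (n := n) l
  have h1 : θ (x l) * (Ring.inverse (YT k q n l) ⊗ₜ[k] Ring.inverse (x l)) = 1 := by
    rw [Hθd, Algebra.TensorProduct.tmul_mul_tmul, Ring.mul_inverse_cancel _ hY,
      Ring.mul_inverse_cancel _ hu, Algebra.TensorProduct.one_def]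
  have h2 : θ (Ring.inverse (x l)) * θ (x l) = 1 := by
    rw [← map_mul, Ring.inverse_mul_cancel _ hu, map_one]
  calc θ (Ring.inverse (x l))
      = θ (Ring.inverse (x l)) *
          (θ (x l) * (Ring.inverse (YT k q n l) ⊗ₜ[k] Ring.inverse (x l))) := by
        rw [h1, mul_one]
    _ = (θ (Ring.inverse (x l)) * θ (x l)) *
          (Ring.inverse (YT k q n l) ⊗ₜ[k] Ring.inverse (x l)) := by rw [mul_assoc]
    _ = Ring.inverse (YT k q n l) ⊗ₜ[k] Ring.inverse (x l) := by rw [h2, one_mul]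

lemma theta_N
    (HθN : ∀ a ∈ Ygen, ∃ i b, θ b = YT k q n i ⊗ₜ[k] b ∧ IsUnit (x i) ∧
      a = Ring.inverse (x i) * b)
    (Hθd : ∀ l, θ (x l) = YT k q n l ⊗ₜ[k] x l) :
    ∀ a ∈ Algebra.adjoin k Ygen, θ a = 1 ⊗ₜ[k] a := by
  intro a ha
  induction ha using Algebra.adjoin_induction with
  | mem y hy =>
      obtain ⟨i, b, hb, hui, rfl⟩ := HθN y hy
      have hY := YT_isUnit (k := k) (q := q) (n := n) i
      rw [map_mul, theta_inv x θ i (Hθd i) hui, hb,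
        Algebra.TensorProduct.tmul_mul_tmul, Ring.inverse_mul_cancel _ hY]
  | algebraMap r =>
      rw [AlgHom.commutes, Algebra.TensorProduct.algebraMap_apply,
        Algebra.algebraMap_eq_smul_one, TensorProduct.smul_tmul,
        ← Algebra.algebraMap_eq_smul_one]
  | add y z hy hz ihy ihz => rw [map_add, ihy, ihz, TensorProduct.tmul_add]
  | mul y z hy hz ihy ihz =>
      rw [map_mul, ihy, ihz, Algebra.TensorProduct.tmul_mul_tmul, one_mul]

lemma theta_P (Hθd : ∀ l, θ (x l) = YT k q n l ⊗ₜ[k] x l) (L : List (Fin (n+1))) :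
    θ (PLst x L) = (L.map (YT k q n)).prod ⊗ₜ[k] PLst x L := by
  induction L with
  | nil => rw [PLst_nil, map_one, List.map_nil, List.prod_nil,
      Algebra.TensorProduct.one_def]
  | cons l L ih =>
      rw [PLst_cons, map_mul, ih, Hθd l, List.map_cons, List.prod_cons,
        Algebra.TensorProduct.tmul_mul_tmul]

lemma phiT_prod (L : List (Fin (n+1))) :
    phiT k q n ((L.map (YT k q n)).prod) = AddMonoidAlgebra.single (wL n L) 1 := by
  rw [map_list_prod, List.map_map]
  have h : (L.map (⇑(phiT k q n) ∘ YT k q n))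
      = L.map fun l => (AddMonoidAlgebra.single (ee n l) (1:k) : Rr k n) :=
    List.map_congr_left fun l _ => phiT_Y l
  rw [h, single_list_prod, wL]

lemma Theta_CC
    (HθN : ∀ a ∈ Ygen, ∃ i b, θ b = YT k q n i ⊗ₜ[k] b ∧ IsUnit (x i) ∧
      a = Ring.inverse (x i) * b)
    (Hθd : ∀ l, θ (x l) = YT k q n l ⊗ₜ[k] x l)
    {g : Fin n → ℤ} {a : A} (ha : a ∈ CC (k := k) x Ygen g) :
    (LinearMap.rTensor A (phiT k q n).toLinearMap) (θ a)
      = AddMonoidAlgebra.single g 1 ⊗ₜ[k] a := by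
  induction ha using Submodule.span_induction with
  | mem a hagen =>
      obtain ⟨m, hm, L, hw, rfl⟩ := hagen
      rw [map_mul, theta_N x Ygen θ HθN Hθd m hm, theta_P x θ Hθd L,
        Algebra.TensorProduct.tmul_mul_tmul, one_mul, LinearMap.rTensor_tmul,
        AlgHom.toLinearMap_apply, phiT_prod, hw]
  | zero => rw [map_zero, map_zero, TensorProduct.tmul_zero]
  | add y z hy hz ihy ihz => rw [map_add, map_add, ihy, ihz, TensorProduct.tmul_add]
  | smul c y hy ihy => rw [map_smul, map_smul, ihy, TensorProduct.tmul_smul]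

theorem generic_coinv
    (Hcomm : ∀ i j, Commute (x i) (x j))
    (Hprod : (List.ofFn x).prod = 1)
    (HSw : ∀ l, ∀ a ∈ Ygen, ∃ c : k, x l * a = c • (a * x l))
    (Gset : Set A) (Hgen : Algebra.adjoin k Gset = ⊤)
    (Hg : ∀ g ∈ Gset, ∃ m ∈ Algebra.adjoin k Ygen, (∃ l, g = m * x l) ∨ g = m)
    (Hθd : ∀ l, θ (x l) = YT k q n l ⊗ₜ[k] x l)
    (HθN : ∀ a ∈ Ygen, ∃ i b, θ b = YT k q n i ⊗ₜ[k] b ∧ IsUnit (x i) ∧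
      a = Ring.inverse (x i) * b) :
    {a : A | θ a = 1 ⊗ₜ[k] a} = (Algebra.adjoin k Ygen : Set A) := by
  ext a
  simp only [Set.mem_setOf_eq, SetLike.mem_coe]
  constructor
  · intro hθa
    have htop := CC_top x Ygen HSw Gset Hgen Hg
    have ha : a ∈ ⨆ g, CC (k := k) x Ygen g := by rw [htop]; exact Submodule.mem_top
    obtain ⟨f, hf, hsum⟩ := (Submodule.mem_iSup_iff_exists_finsupp _ _).1 ha
    let ε : Rr k n →ₗ[k] k :=
      { toFun := fun p => p.coeff 0
        map_add' := fun p q => Finsupp.add_apply p.coeff q.coeff 0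
        map_smul' := fun c p => by
          show (c • p).coeff 0 = c • p.coeff 0
          exact Finsupp.smul_apply c p.coeff 0 }
    let E2 : Rr k n ⊗[k] A →ₗ[k] A :=
      (TensorProduct.lid k A).toLinearMap.comp (LinearMap.rTensor A ε)
    have hε : ∀ g : Fin n → ℤ, ε (AddMonoidAlgebra.single g 1) = if g = 0 then (1:k) else 0 := by
      intro g
      show (Finsupp.single g (1:k)) 0 = _
      rw [Finsupp.single_apply]
    have hE2 : ∀ (g : Fin n → ℤ) (b : A),
        E2 (AddMonoidAlgebra.single g 1 ⊗ₜ[k] b) = if g = 0 then b else 0 := by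
      intro g b
      show (TensorProduct.lid k A) ((LinearMap.rTensor A ε) (AddMonoidAlgebra.single g 1 ⊗ₜ[k] b)) = _
      rw [LinearMap.rTensor_tmul, hε, TensorProduct.lid_tmul]
      split <;> simp
    have key : E2 ((LinearMap.rTensor A (phiT k q n).toLinearMap) (θ a)) = a := by
      rw [hθa, LinearMap.rTensor_tmul, AlgHom.toLinearMap_apply, map_one,
        AddMonoidAlgebra.one_def, hE2, if_pos rfl]
    have key2 : E2 ((LinearMap.rTensor A (phiT k q n).toLinearMap) (θ a)) = f 0 := by
      conv_lhs => rw [← hsum]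
      rw [map_finsuppSum, map_finsuppSum, map_finsuppSum]
      have hterm : (f.sum fun g xi =>
          E2 ((LinearMap.rTensor A (phiT k q n).toLinearMap) (θ xi)))
          = f.sum fun g xi => if g = 0 then xi else 0 :=
        Finsupp.sum_congr fun g _ => by
          rw [Theta_CC x Ygen θ HθN Hθd (hf g), hE2]
      rw [hterm, Finsupp.sum]
      rw [Finset.sum_ite_eq' f.support 0 (fun g => f g)]
      split
      · rfl
      · rename_i hns
        exact (Finsupp.notMem_support_iff.1 hns).symm
    have hmem : a ∈ CC (k := k) x Ygen 0 := by
      have haf : a = f 0 := key.symm.trans key2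
      rw [haf]; exact hf 0
    exact CC_zero_le x Ygen Hcomm Hprod hmem
  · intro ha
    exact theta_N x Ygen θ HθN Hθd a ha

end Theta

section Borel
variable {k : Type} [Field k] {q : k} {n : ℕ}

/-- Projection onto `O_q(B⁺)`. -/
def Fp (k : Type) [Field k] (q : k) (n : ℕ) :
    FreeAlgebra k (Fin (n+1) × Fin (n+1)) →ₐ[k] OqBp k q n :=
  (RingQuot.mkAlgHom k (BpRel k q n)).comp (RingQuot.mkAlgHom k (SLRel k q n))

/-- Projection onto `O_q(B⁻)`. -/
def Fm (k : Type) [Field k] (q : k) (n : ℕ) :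
    FreeAlgebra k (Fin (n+1) × Fin (n+1)) →ₐ[k] OqBm k q n :=
  (RingQuot.mkAlgHom k (BmRel k q n)).comp (RingQuot.mkAlgHom k (SLRel k q n))

lemma Fp_rel : ∀ ⦃a b⦄, SLRel k q n a b → Fp k q n a = Fp k q n b :=
  fun _ _ h => congrArg (RingQuot.mkAlgHom k (BpRel k q n)) (RingQuot.mkAlgHom_rel k h)

lemma Fm_rel : ∀ ⦃a b⦄, SLRel k q n a b → Fm k q n a = Fm k q n b :=
  fun _ _ h => congrArg (RingQuot.mkAlgHom k (BmRel k q n)) (RingQuot.mkAlgHom_rel k h)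

lemma XBp_eq (i j : Fin (n+1)) : XBp k q n i j = Fp k q n (Xf k n i j) := rfl

lemma XBm_eq (i j : Fin (n+1)) : XBm k q n i j = Fm k q n (Xf k n i j) := rfl

lemma XBp_zero {i j : Fin (n+1)} (h : j < i) : XBp k q n i j = 0 := by
  have h1 := RingQuot.mkAlgHom_rel k (BpRel.zero (k := k) (q := q) (n := n) h)
  rw [map_zero] at h1
  exact h1

lemma XBm_zero {i j : Fin (n+1)} (h : i < j) : XBm k q n i j = 0 := by
  have h1 := RingQuot.mkAlgHom_rel k (BmRel.zero (k := k) (q := q) (n := n) h)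
  rw [map_zero] at h1
  exact h1

lemma Bp_van : ∀ σ : Equiv.Perm (Fin (n+1)), σ ≠ 1 →
    ∃ i, Fp k q n (Xf k n i (σ i)) = 0 := by
  intro σ hσ
  obtain ⟨i, hi⟩ := perm_exists_lt σ hσ
  exact ⟨i, by rw [← XBp_eq]; exact XBp_zero hi⟩

lemma Bm_van : ∀ σ : Equiv.Perm (Fin (n+1)), σ ≠ 1 →
    ∃ i, Fm k q n (Xf k n i (σ i)) = 0 := by
  intro σ hσ
  obtain ⟨i, hi⟩ := perm_exists_gt σ hσ
  exact ⟨i, by rw [← XBm_eq]; exact XBm_zero hi⟩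

lemma Bp_corr : ∀ i j : Fin (n+1), i < j →
    Fp k q n (Xf k n i j) * Fp k q n (Xf k n j i) = 0 := by
  intro i j h
  rw [← XBp_eq, ← XBp_eq, XBp_zero h, mul_zero]

lemma Bm_corr : ∀ i j : Fin (n+1), i < j →
    Fm k q n (Xf k n i j) * Fm k q n (Xf k n j i) = 0 := by
  intro i j h
  rw [← XBm_eq, ← XBm_eq, XBm_zero h, zero_mul]

lemma XBp_comm (i j : Fin (n+1)) : Commute (XBp k q n i i) (XBp k q n j j) := by
  show XBp k q n i i * XBp k q n j j = XBp k q n j j * XBp k q n i i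
  rw [XBp_eq i i, XBp_eq j j]
  exact (@gen_diag_commute k _ q n (OqBp k q n) _ _ (Fp k q n) Fp_rel Bp_corr i j).eq

lemma XBm_comm (i j : Fin (n+1)) : Commute (XBm k q n i i) (XBm k q n j j) := by
  show XBm k q n i i * XBm k q n j j = XBm k q n j j * XBm k q n i i
  rw [XBm_eq i i, XBm_eq j j]
  exact (@gen_diag_commute k _ q n (OqBm k q n) _ _ (Fm k q n) Fm_rel Bm_corr i j).eq

lemma XBp_prod : (List.ofFn fun i => XBp k q n i i).prod = 1 := by
  have hfn : (fun i => XBp k q n i i) = fun i => Fp k q n (Xf k n i i) :=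
    funext fun i => XBp_eq i i
  rw [hfn]
  exact @gen_diag_prod k _ q n (OqBp k q n) _ _ (Fp k q n) Fp_rel Bp_van

lemma XBm_prod : (List.ofFn fun i => XBm k q n i i).prod = 1 := by
  have hfn : (fun i => XBm k q n i i) = fun i => Fm k q n (Xf k n i i) :=
    funext fun i => XBm_eq i i
  rw [hfn]
  exact @gen_diag_prod k _ q n (OqBm k q n) _ _ (Fm k q n) Fm_rel Bm_van

lemma XBp_isUnit (i : Fin (n+1)) : IsUnit (XBp k q n i i) := by
  rw [XBp_eq i i]
  exact @gen_diag_isUnit k _ q n (OqBp k q n) _ _ (Fp k q n) Fp_rel Bp_van Bp_corr i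

lemma XBm_isUnit (i : Fin (n+1)) : IsUnit (XBm k q n i i) := by
  rw [XBm_eq i i]
  exact @gen_diag_isUnit k _ q n (OqBm k q n) _ _ (Fm k q n) Fm_rel Bm_van Bm_corr i

lemma bp_row {i j m : Fin (n+1)} (h : j < m) :
    XBp k q n i j * XBp k q n i m = q • (XBp k q n i m * XBp k q n i j) :=
  by rw [XBp_eq i j, XBp_eq i m]; exact @gen_row k _ q n (OqBp k q n) _ _ (Fp k q n) Fp_rel i j m h

lemma bp_col {i l j : Fin (n+1)} (h : i < l) :
    XBp k q n i j * XBp k q n l j = q • (XBp k q n l j * XBp k q n i j) :=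
  by rw [XBp_eq i j, XBp_eq l j]; exact @gen_col k _ q n (OqBp k q n) _ _ (Fp k q n) Fp_rel i l j h

lemma bp_swap {i l j m : Fin (n+1)} (h1 : i < l) (h2 : m < j) :
    XBp k q n i j * XBp k q n l m = XBp k q n l m * XBp k q n i j :=
  by rw [XBp_eq i j, XBp_eq l m]; exact @gen_swap k _ q n (OqBp k q n) _ _ (Fp k q n) Fp_rel i l j m h1 h2

lemma bp_mixed {i l j m : Fin (n+1)} (h1 : i < l) (h2 : j < m) :
    XBp k q n i j * XBp k q n l m
      = XBp k q n l m * XBp k q n i j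
        + (q - q⁻¹) • (XBp k q n i m * XBp k q n l j) :=
  by rw [XBp_eq i j, XBp_eq l m, XBp_eq i m, XBp_eq l j]; exact @gen_mixed k _ q n (OqBp k q n) _ _ (Fp k q n) Fp_rel i l j m h1 h2

lemma bm_row {i j m : Fin (n+1)} (h : j < m) :
    XBm k q n i j * XBm k q n i m = q • (XBm k q n i m * XBm k q n i j) :=
  by rw [XBm_eq i j, XBm_eq i m]; exact @gen_row k _ q n (OqBm k q n) _ _ (Fm k q n) Fm_rel i j m h

lemma bm_col {i l j : Fin (n+1)} (h : i < l) :
    XBm k q n i j * XBm k q n l j = q • (XBm k q n l j * XBm k q n i j) :=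
  by rw [XBm_eq i j, XBm_eq l j]; exact @gen_col k _ q n (OqBm k q n) _ _ (Fm k q n) Fm_rel i l j h

lemma bm_swap {i l j m : Fin (n+1)} (h1 : i < l) (h2 : m < j) :
    XBm k q n i j * XBm k q n l m = XBm k q n l m * XBm k q n i j :=
  by rw [XBm_eq i j, XBm_eq l m]; exact @gen_swap k _ q n (OqBm k q n) _ _ (Fm k q n) Fm_rel i l j m h1 h2

lemma bm_mixed {i l j m : Fin (n+1)} (h1 : i < l) (h2 : j < m) :
    XBm k q n i j * XBm k q n l m
      = XBm k q n l m * XBm k q n i j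
        + (q - q⁻¹) • (XBm k q n i m * XBm k q n l j) :=
  by rw [XBm_eq i j, XBm_eq l m, XBm_eq i m, XBm_eq l j]; exact @gen_mixed k _ q n (OqBm k q n) _ _ (Fm k q n) Fm_rel i l j m h1 h2

lemma XBp_qcomm (hq0 : q ≠ 0) (l : Fin (n+1)) {i j : Fin (n+1)} (hij : i < j) :
    XBp k q n l l * XBp k q n i j
      = (if l = i then q else if l = j then q⁻¹ else 1) •
          (XBp k q n i j * XBp k q n l l) := by
  by_cases hli : l = i
  · subst hli
    rw [if_pos rfl]
    exact bp_row hij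
  · by_cases hlj : l = j
    · subst hlj
      rw [if_neg hli, if_pos rfl]
      have h := bp_col (k := k) (q := q) (n := n) (i := i) (l := l) (j := l) hij
      rw [h, smul_smul, inv_mul_cancel₀ hq0, one_smul]
    · rw [if_neg hli, if_neg hlj, one_smul]
      rcases lt_trichotomy l i with h | h | h
      · have hm := bp_mixed (k := k) (q := q) (n := n)
          (i := l) (l := i) (j := l) (m := j) h (h.trans hij)
        rw [XBp_zero h, mul_zero, smul_zero, add_zero] at hm
        exact hm
      · exact absurd h hli
      · rcases lt_trichotomy l j with h2 | h2 | h2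
        · exact (bp_swap h h2).symm
        · exact absurd h2 hlj
        · have hm := bp_mixed (k := k) (q := q) (n := n)
            (i := i) (l := l) (j := j) (m := l) h h2
          rw [XBp_zero h2, mul_zero, smul_zero, add_zero] at hm
          exact hm.symm

lemma XBm_qcomm (hq0 : q ≠ 0) (l : Fin (n+1)) {r s : Fin (n+1)} (hsr : s < r) :
    XBm k q n l l * XBm k q n r s
      = (if l = r then q⁻¹ else if l = s then q else 1) •
          (XBm k q n r s * XBm k q n l l) := by
  by_cases hlr : l = r
  · subst hlr
    rw [if_pos rfl]
    have h := bm_row (k := k) (q := q) (n := n) (i := l) (j := s) (m := l) hsr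
    rw [h, smul_smul, inv_mul_cancel₀ hq0, one_smul]
  · by_cases hls : l = s
    · subst hls
      rw [if_neg hlr, if_pos rfl]
      exact bm_col hsr
    · rw [if_neg hlr, if_neg hls, one_smul]
      rcases lt_trichotomy l s with h | h | h
      · have hm := bm_mixed (k := k) (q := q) (n := n)
          (i := l) (l := r) (j := l) (m := s) (h.trans hsr) h
        rw [XBm_zero h, zero_mul, smul_zero, add_zero] at hm
        exact hm
      · exact absurd h hls
      · rcases lt_trichotomy l r with h2 | h2 | h2
        · exact bm_swap (k := k) (q := q) (n := n) (i := l) (l := r) (j := l) (m := s) h2 h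
        · exact absurd h2 hlr
        · have hm := bm_mixed (k := k) (q := q) (n := n)
            (i := r) (l := l) (j := s) (m := l) h2 (hsr.trans h2)
          rw [XBm_zero h2, zero_mul, smul_zero, add_zero] at hm
          exact hm.symm

lemma XBp_inv_comm (l i : Fin (n+1)) :
    XBp k q n l l * Ring.inverse (XBp k q n i i)
      = Ring.inverse (XBp k q n i i) * XBp k q n l l :=
  (inv_comm (A := OqBp k q n) (XBp_isUnit i) (XBp_comm i l).eq).symm

lemma XBm_inv_comm (l i : Fin (n+1)) :
    XBm k q n l l * Ring.inverse (XBm k q n i i)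
      = Ring.inverse (XBm k q n i i) * XBm k q n l l :=
  (inv_comm (A := OqBm k q n) (XBm_isUnit i) (XBm_comm i l).eq).symm

lemma Bp_HSw (hq0 : q ≠ 0) : ∀ l, ∀ a ∈ {a | ∃ i j : Fin (n+1), i < j ∧ a = yY k q n i j},
    ∃ c : k, XBp k q n l l * a = c • (a * XBp k q n l l) := by
  rintro l a ⟨i, j, hij, rfl⟩
  refine ⟨if l = i then q else if l = j then q⁻¹ else 1, ?_⟩
  rw [yY, ← mul_assoc, XBp_inv_comm, mul_assoc, XBp_qcomm hq0 l hij,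
    mul_smul_comm, mul_assoc]

lemma Bm_HSw (hq0 : q ≠ 0) : ∀ l, ∀ a ∈ {a | ∃ i j : Fin (n+1), i < j ∧ a = yNm k q n i j},
    ∃ c : k, XBm k q n l l * a = c • (a * XBm k q n l l) := by
  rintro l a ⟨i, j, hij, rfl⟩
  refine ⟨if l = j then q⁻¹ else if l = i then q else 1, ?_⟩
  rw [yNm, ← mul_assoc, XBm_inv_comm, mul_assoc, XBm_qcomm hq0 l hij,
    mul_smul_comm, mul_assoc]

lemma Bp_adjoin_top :
    Algebra.adjoin k (Set.range fun p : Fin (n+1) × Fin (n+1) => XBp k q n p.1 p.2) = ⊤ := by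
  have h2 := AlgHom.map_adjoin (Fp k q n)
    (Set.range (FreeAlgebra.ι k : Fin (n+1) × Fin (n+1) → _))
  rw [FreeAlgebra.adjoin_range_ι, Algebra.map_top] at h2
  have hsurj : Function.Surjective (Fp k q n) := by
    rw [Fp, AlgHom.coe_comp]
    exact (RingQuot.mkAlgHom_surjective k _).comp (RingQuot.mkAlgHom_surjective k _)
  rw [(AlgHom.range_eq_top _).2 hsurj] at h2
  rw [← Set.range_comp] at h2
  have hset : (Set.range (⇑(Fp k q n) ∘ FreeAlgebra.ι k))
      = Set.range (fun p : Fin (n+1) × Fin (n+1) => XBp k q n p.1 p.2) := by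
    apply congrArg Set.range
    funext p
    exact (XBp_eq p.1 p.2).symm
  rw [hset] at h2
  exact h2.symm

lemma Bm_adjoin_top :
    Algebra.adjoin k (Set.range fun p : Fin (n+1) × Fin (n+1) => XBm k q n p.1 p.2) = ⊤ := by
  have h2 := AlgHom.map_adjoin (Fm k q n)
    (Set.range (FreeAlgebra.ι k : Fin (n+1) × Fin (n+1) → _))
  rw [FreeAlgebra.adjoin_range_ι, Algebra.map_top] at h2
  have hsurj : Function.Surjective (Fm k q n) := by
    rw [Fm, AlgHom.coe_comp]
    exact (RingQuot.mkAlgHom_surjective k _).comp (RingQuot.mkAlgHom_surjective k _)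
  rw [(AlgHom.range_eq_top _).2 hsurj] at h2
  rw [← Set.range_comp] at h2
  have hset : (Set.range (⇑(Fm k q n) ∘ FreeAlgebra.ι k))
      = Set.range (fun p : Fin (n+1) × Fin (n+1) => XBm k q n p.1 p.2) := by
    apply congrArg Set.range
    funext p
    exact (XBm_eq p.1 p.2).symm
  rw [hset] at h2
  exact h2.symm

lemma Bp_Hg (hq0 : q ≠ 0) :
    ∀ g ∈ (Set.range fun p : Fin (n+1) × Fin (n+1) => XBp k q n p.1 p.2),
      ∃ m ∈ Algebra.adjoin k {a | ∃ i j : Fin (n+1), i < j ∧ a = yY k q n i j},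
        (∃ l, g = m * XBp k q n l l) ∨ g = m := by
  rintro g ⟨p, rfl⟩
  show ∃ m ∈ Algebra.adjoin k {a | ∃ i j : Fin (n+1), i < j ∧ a = yY k q n i j},
      (∃ l, XBp k q n p.1 p.2 = m * XBp k q n l l) ∨ XBp k q n p.1 p.2 = m
  rcases lt_trichotomy p.1 p.2 with h | h | h
  · refine ⟨q • yY k q n p.1 p.2, ?_, Or.inl ?_⟩
    · exact Subalgebra.smul_mem _ (Algebra.subset_adjoin
        (show yY k q n p.1 p.2 ∈ {a | ∃ i j : Fin (n+1), i < j ∧ a = yY k q n i j}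
          from ⟨p.1, p.2, h, rfl⟩)) q
    refine ⟨p.1, ?_⟩
    have h1 : XBp k q n p.1 p.2 * XBp k q n p.1 p.1
        = q⁻¹ • (XBp k q n p.1 p.1 * XBp k q n p.1 p.2) := by
      rw [XBp_qcomm hq0 p.1 h, if_pos rfl, smul_smul, inv_mul_cancel₀ hq0, one_smul]
    rw [yY, smul_mul_assoc, mul_assoc, h1, mul_smul_comm, smul_smul,
      mul_inv_cancel₀ hq0, one_smul, ← mul_assoc,
      Ring.inverse_mul_cancel _ (XBp_isUnit p.1), one_mul]
  · refine ⟨1, ?_, Or.inl ?_⟩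
    · exact one_mem _
    refine ⟨p.1, ?_⟩
    rw [one_mul, h]
  · exact ⟨0, zero_mem _, Or.inr (XBp_zero h)⟩

lemma Bm_Hg (hq0 : q ≠ 0) :
    ∀ g ∈ (Set.range fun p : Fin (n+1) × Fin (n+1) => XBm k q n p.1 p.2),
      ∃ m ∈ Algebra.adjoin k {a | ∃ i j : Fin (n+1), i < j ∧ a = yNm k q n i j},
        (∃ l, g = m * XBm k q n l l) ∨ g = m := by
  rintro g ⟨p, rfl⟩
  show ∃ m ∈ Algebra.adjoin k {a | ∃ i j : Fin (n+1), i < j ∧ a = yNm k q n i j},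
      (∃ l, XBm k q n p.1 p.2 = m * XBm k q n l l) ∨ XBm k q n p.1 p.2 = m
  rcases lt_trichotomy p.1 p.2 with h | h | h
  · exact ⟨0, zero_mem _, Or.inr (XBm_zero h)⟩
  · refine ⟨1, ?_, Or.inl ?_⟩
    · exact one_mem _
    refine ⟨p.1, ?_⟩
    rw [one_mul, h]
  · refine ⟨q⁻¹ • yNm k q n p.2 p.1, ?_, Or.inl ?_⟩
    · exact Subalgebra.smul_mem _ (Algebra.subset_adjoin
        (show yNm k q n p.2 p.1 ∈ {a | ∃ i j : Fin (n+1), i < j ∧ a = yNm k q n i j}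
          from ⟨p.2, p.1, h, rfl⟩)) q⁻¹
    refine ⟨p.1, ?_⟩
    have h1 : XBm k q n p.1 p.2 * XBm k q n p.1 p.1
        = q • (XBm k q n p.1 p.1 * XBm k q n p.1 p.2) := by
      rw [XBm_qcomm hq0 p.1 h, if_pos rfl, smul_smul, mul_inv_cancel₀ hq0, one_smul]
    rw [yNm, smul_mul_assoc, mul_assoc, h1, mul_smul_comm, smul_smul,
      inv_mul_cancel₀ hq0, one_smul, ← mul_assoc,
      Ring.inverse_mul_cancel _ (XBm_isUnit p.1), one_mul]

end Borel

end QSL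

open QSL in
/-- The coinvariants of the left coactions `θ±` are exactly `O_q(N±)`. -/
theorem theta_coinvariants (k : Type) [Field k] (q : k) (hq0 : q ≠ 0)
    (hq : ∀ m : ℕ, 0 < m → q ^ m ≠ 1) (n : ℕ) (hn : 1 ≤ n) :
    (∀ θp : OqBp k q n →ₐ[k] OqT k q n ⊗[k] OqBp k q n,
      (∀ i j : Fin (n+1), i ≤ j → θp (XBp k q n i j) = YT k q n i ⊗ₜ[k] XBp k q n i j) →
      {x : OqBp k q n | θp x = 1 ⊗ₜ[k] x} = (OqNp k q n : Set (OqBp k q n))) ∧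
    (∀ θm : OqBm k q n →ₐ[k] OqT k q n ⊗[k] OqBm k q n,
      (∀ i j : Fin (n+1), j ≤ i → θm (XBm k q n i j) = YT k q n i ⊗ₜ[k] XBm k q n i j) →
      {x : OqBm k q n | θm x = 1 ⊗ₜ[k] x} = (OqNm k q n : Set (OqBm k q n))) := by
  constructor
  · intro θp hθp
    have hres := generic_coinv (q := q) (A := OqBp k q n)
      (fun i => XBp k q n i i)
      {a | ∃ i j : Fin (n+1), i < j ∧ a = yY k q n i j} θp
      XBp_comm XBp_prod (Bp_HSw hq0)
      (Set.range fun p : Fin (n+1) × Fin (n+1) => XBp k q n p.1 p.2)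
      Bp_adjoin_top (Bp_Hg hq0)
      (fun l => hθp l l le_rfl)
      (by
        rintro a ⟨i, j, hij, rfl⟩
        exact ⟨i, XBp k q n i j, hθp i j hij.le, XBp_isUnit i, rfl⟩)
    exact hres
  · intro θm hθm
    have hres := generic_coinv (q := q) (A := OqBm k q n)
      (fun i => XBm k q n i i)
      {a | ∃ i j : Fin (n+1), i < j ∧ a = yNm k q n i j} θm
      XBm_comm XBm_prod (Bm_HSw hq0)
      (Set.range fun p : Fin (n+1) × Fin (n+1) => XBm k q n p.1 p.2)
      Bm_adjoin_top (Bm_Hg hq0)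
      (fun l => hθm l l le_rfl)
      (by
        rintro a ⟨i, j, hij, rfl⟩
        exact ⟨j, XBm k q n j i, hθm j i hij.le, XBm_isUnit j, rfl⟩)
    exact hres
end
end

section
/- The assignment Y_{ii} ↦ X_{ii} extends to a well-defined k-algebra homomorphism r⁺ : O_q(T) → O_q(B⁺); r⁺ is injective, its image is the subalgebra L⁺ of O_q(B⁺) generated by {X_{ii}, X_{ii}⁻¹ : 1 ≤ i ≤ n+1}, and p⁺ ∘ r⁺ = id_{O_q(T)}, where p⁺ : O_q(B⁺) → O_q(T) is the canonical projection (p⁺(X_{ii}) = Y_{ii} and p⁺(X_{ij}) = 0 for i < j). -/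
open scoped TensorProduct

noncomputable section

namespace QSLAux

open QSL

theorem list_pull {M : Type*} [Monoid M] :
    ∀ (l : List M) (a : M), a ∈ l → (∀ x ∈ l, ∀ y ∈ l, Commute x y) →
      ∃ t : List M, (∀ x ∈ t, x ∈ l) ∧ l.prod = a * t.prod ∧ l.prod = t.prod * a := by
  intro l
  induction l with
  | nil => intro a ha; simp at ha
  | cons b t' ih =>
    intro a ha hc
    rcases List.mem_cons.1 ha with rfl | ha'
    · refine ⟨t', fun x hx => List.mem_cons_of_mem _ hx, by simp, ?_⟩
      have hco : Commute a t'.prod :=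
        Commute.list_prod_right _ _ fun x hx =>
          hc a (List.mem_cons_self) x (List.mem_cons_of_mem _ hx)
      rw [List.prod_cons, hco.eq]
    · obtain ⟨t, ht, h1, h2⟩ := ih a ha'
        (fun x hx y hy => hc x (List.mem_cons_of_mem _ hx) y (List.mem_cons_of_mem _ hy))
      have hab : Commute b a := hc b (List.mem_cons_self) a ha
      refine ⟨b :: t, ?_, ?_, ?_⟩
      · intro x hx
        rcases List.mem_cons.1 hx with rfl | hx'
        · exact List.mem_cons_self
        · exact List.mem_cons_of_mem _ (ht x hx')
      · rw [List.prod_cons, List.prod_cons, h1, ← mul_assoc, ← mul_assoc, hab.eq]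
      · rw [List.prod_cons, List.prod_cons, h2, mul_assoc]

theorem perm_exists_lt {m : ℕ} (σ : Equiv.Perm (Fin m)) (hσ : σ ≠ 1) : ∃ i, σ i < i := by
  by_contra h
  push_neg at h
  apply hσ
  ext j
  simp only [Equiv.Perm.coe_one, id_eq]
  by_contra hj
  have hsum : ∑ i : Fin m, ((σ i : ℕ)) = ∑ i : Fin m, (i : ℕ) :=
    Equiv.sum_comp σ (fun i => (i : ℕ))
  have hlt : ∑ i : Fin m, (i : ℕ) < ∑ i : Fin m, ((σ i : ℕ)) := by
    refine Finset.sum_lt_sum (fun i _ => ?_) ⟨j, Finset.mem_univ j, ?_⟩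
    · exact_mod_cast h i
    · exact lt_of_le_of_ne (by exact_mod_cast h j) (Ne.symm hj)
  omega

theorem exists_ne_of_ne_one {m : ℕ} (σ : Equiv.Perm (Fin m)) (hσ : σ ≠ 1) : ∃ i, σ i ≠ i := by
  by_contra h
  push_neg at h
  exact hσ (Equiv.ext fun i => h i)

theorem invCount_one {m : ℕ} : invCount (1 : Equiv.Perm (Fin m)) = 0 := by
  rw [invCount, Finset.card_eq_zero, Finset.filter_eq_empty_iff]
  rintro p -
  rintro ⟨h1, h2⟩
  simp only [Equiv.Perm.coe_one, id_eq] at h2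
  exact absurd (h1.trans h2) (lt_irrefl _)

theorem detSum {k : Type} [Field k] (q : k) {M : Type*} [Ring M] [Algebra k M] {m : ℕ}
    (g : Fin (m+1) → Fin (m+1) → M)
    (hz : ∀ σ : Equiv.Perm (Fin (m+1)), σ ≠ 1 → ∃ i, g i (σ i) = 0) :
    ∑ σ : Equiv.Perm (Fin (m+1)), ((-q) ^ invCount σ) • (List.ofFn fun i => g i (σ i)).prod
      = (List.ofFn fun i => g i i).prod := by
  rw [Finset.sum_eq_single (1 : Equiv.Perm (Fin (m+1)))]
  · simp [invCount_one]
  · intro σ _ hσ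
    obtain ⟨i, hi⟩ := hz σ hσ
    have hzero : (List.ofFn fun i => g i (σ i)).prod = 0 :=
      List.prod_eq_zero (List.mem_ofFn.2 ⟨i, hi⟩)
    rw [hzero, smul_zero]
  · intro h
    exact absurd (Finset.mem_univ _) h

variable (k : Type) [Field k] (q : k) (n : ℕ)

theorem XBp_eq_zero {i j : Fin (n+1)} (h : j < i) : XBp k q n i j = 0 := by
  have h1 := RingQuot.mkAlgHom_rel k (BpRel.zero (k := k) (q := q) (n := n) h)
  rw [map_zero] at h1
  exact h1

theorem XBp_comm_lt {i j : Fin (n+1)} (h : i < j) :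
    XBp k q n i i * XBp k q n j j = XBp k q n j j * XBp k q n i i := by
  have h1 := congrArg (RingQuot.mkAlgHom k (BpRel k q n))
    (RingQuot.mkAlgHom_rel k (SLRel.mixed (k := k) (q := q) (n := n)
      (i := i) (j := i) (l := j) (m := j) h h))
  simp only [map_mul, map_add, map_smul] at h1
  have hz : XBp k q n j i = 0 := XBp_eq_zero k q n h
  simp only [XBp, XSL] at hz ⊢
  rw [h1, hz, mul_zero, smul_zero, add_zero]

theorem XBp_comm (i j : Fin (n+1)) : Commute (XBp k q n i i) (XBp k q n j j) := by
  rcases lt_trichotomy i j with h | rfl | h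
  · exact XBp_comm_lt k q n h
  · exact Commute.refl _
  · exact (XBp_comm_lt k q n h).symm

theorem prod_diag_eq_one :
    (List.ofFn fun i : Fin (n+1) => XBp k q n i i).prod = 1 := by
  have h1 := congrArg (RingQuot.mkAlgHom k (BpRel k q n))
    (RingQuot.mkAlgHom_rel k (SLRel.det (k := k) (q := q) (n := n)))
  rw [map_one, map_one] at h1
  have h2 : (RingQuot.mkAlgHom k (BpRel k q n)) ((RingQuot.mkAlgHom k (SLRel k q n)) (qdet k q n))
      = ∑ σ : Equiv.Perm (Fin (n+1)),
          ((-q) ^ invCount σ) • (List.ofFn fun i => XBp k q n i (σ i)).prod := by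
    simp only [qdet, map_sum, map_smul, map_list_prod, List.map_ofFn, Function.comp_def,
      XBp, XSL, Xf]
  rw [h2] at h1
  rw [detSum q (fun i j => XBp k q n i j) ?_] at h1
  · exact h1
  · intro σ hσ
    obtain ⟨i, hi⟩ := perm_exists_lt σ hσ
    exact ⟨i, XBp_eq_zero k q n hi⟩

end QSLAux

open QSLAux

open QSL in
/-- `Y_{ii} ↦ X_{ii}` extends to a `k`-algebra homomorphism `r⁺ : O_q(T) → O_q(B⁺)`,
which is injective, has image the subalgebra `L⁺` generated by the `X_{ii}` and `X_{ii}⁻¹`,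
and satisfies `p⁺ ∘ r⁺ = id` for the canonical projection `p⁺ : O_q(B⁺) → O_q(T)`. -/
theorem section_r_plus (k : Type) [Field k] (q : k) (hq0 : q ≠ 0)
    (hq : ∀ m : ℕ, 0 < m → q ^ m ≠ 1) (n : ℕ) (hn : 1 ≤ n) :
    ∀ p : OqBp k q n →ₐ[k] OqT k q n,
      (∀ i : Fin (n+1), p (XBp k q n i i) = YT k q n i) →
      (∀ i j : Fin (n+1), i < j → p (XBp k q n i j) = 0) →
      ∃ r : OqT k q n →ₐ[k] OqBp k q n,
        (∀ i : Fin (n+1), r (YT k q n i) = XBp k q n i i) ∧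
        Function.Injective r ∧
        r.range = Algebra.adjoin k
          {a : OqBp k q n | ∃ i : Fin (n+1),
            a = XBp k q n i i ∨ a = Ring.inverse (XBp k q n i i)} ∧
        p.comp r = AlgHom.id k (OqT k q n) := by
  intro p hp1 hp2
  classical
  set ψ : FreeAlgebra k (Fin (n+1) × Fin (n+1)) →ₐ[k] OqBp k q n :=
    FreeAlgebra.lift k (fun x : Fin (n+1) × Fin (n+1) =>
      if x.1 = x.2 then XBp k q n x.1 x.1 else 0) with hψdef
  have hψι : ∀ i j : Fin (n+1), ψ (Xf k n i j) = if i = j then XBp k q n i i else 0 := by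
    intro i j
    rw [hψdef, Xf, FreeAlgebra.lift_ι_apply]
  have hψ : ∀ ⦃x y⦄, SLRel k q n x y → ψ x = ψ y := by
    intro x y hxy
    cases hxy with
    | @row i j m h =>
      simp only [map_mul, map_smul, hψι]
      by_cases hij : i = j <;> by_cases him : i = m
      · exact absurd (hij.symm.trans him) (ne_of_lt h)
      · simp [him]
      · simp [hij]
      · simp [hij]
    | @col i l j h =>
      simp only [map_mul, map_smul, hψι]
      by_cases hij : i = j <;> by_cases hlj : l = j
      · exact absurd (hij.trans hlj.symm) (ne_of_lt h)
      · simp [hlj]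
      · simp [hij]
      · simp [hij]
    | @swap i l j m h1 h2 =>
      simp only [map_mul, hψι]
      by_cases hij : i = j <;> by_cases hlm : l = m
      · rw [hij, hlm] at h1
        exact absurd (h1.trans h2) (lt_irrefl _)
      · simp [hlm]
      · simp [hij]
      · simp [hij]
    | @mixed i l j m h1 h2 =>
      simp only [map_mul, map_add, map_smul, hψι]
      have h2z : (if i = m then XBp k q n i i else 0) * (if l = j then XBp k q n l l else 0)
          = 0 := by
        by_cases him : i = m
        · have hlj : ¬ l = j := by
            intro hh
            rw [← hh, ← him] at h2
            exact absurd (h1.trans h2) (lt_irrefl _)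
          simp [hlj]
        · simp [him]
      rw [h2z, smul_zero, add_zero]
      by_cases hij : i = j <;> by_cases hlm : l = m <;>
        simp [hij, hlm, (XBp_comm k q n j m).eq]
    | det =>
      rw [map_one]
      have h2 : ψ (qdet k q n)
          = ∑ σ : Equiv.Perm (Fin (n+1)), ((-q) ^ invCount σ) •
              (List.ofFn fun i => if i = σ i then XBp k q n i i else 0).prod := by
        simp only [qdet, map_sum, map_smul, map_list_prod, List.map_ofFn, Function.comp_def, hψι]
      rw [h2, detSum q (fun i j => if i = j then XBp k q n i i else 0) ?_]
      · simpa using prod_diag_eq_one k q n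
      · intro σ hσ
        obtain ⟨i, hi⟩ := exists_ne_of_ne_one σ hσ
        exact ⟨i, if_neg (fun hh => hi hh.symm)⟩
  have hφX : ∀ i j : Fin (n+1), (RingQuot.liftAlgHom k ⟨ψ, hψ⟩) (XSL k q n i j)
      = if i = j then XBp k q n i i else 0 := by
    intro i j
    rw [XSL, RingQuot.liftAlgHom_mkAlgHom_apply]
    exact hψι i j
  have hT : ∀ ⦃x y⦄, TRel k q n x y →
      (RingQuot.liftAlgHom k ⟨ψ, hψ⟩) x = (RingQuot.liftAlgHom k ⟨ψ, hψ⟩) y := by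
    intro x y hxy
    cases hxy with
    | zero h => rw [map_zero, hφX, if_neg h]
  set R : OqT k q n →ₐ[k] OqBp k q n :=
    RingQuot.liftAlgHom k ⟨RingQuot.liftAlgHom k ⟨ψ, hψ⟩, hT⟩ with hR
  have hrX : ∀ i j : Fin (n+1),
      R (RingQuot.mkAlgHom k (TRel k q n) (XSL k q n i j)) = if i = j then XBp k q n i i else 0 := by
    intro i j
    rw [hR, RingQuot.liftAlgHom_mkAlgHom_apply]
    exact hφX i j
  have hrY : ∀ i : Fin (n+1), R (YT k q n i) = XBp k q n i i := by
    intro i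
    rw [YT, hrX, if_pos rfl]
  have hpr : p.comp R = AlgHom.id k (OqT k q n) := by
    apply RingQuot.ringQuot_ext'
    apply RingQuot.ringQuot_ext'
    apply FreeAlgebra.hom_ext
    funext x
    obtain ⟨i, j⟩ := x
    simp only [Function.comp_apply, AlgHom.coe_comp, AlgHom.id_apply, Function.comp_def]
    have hx : RingQuot.mkAlgHom k (SLRel k q n) (FreeAlgebra.ι k (i, j)) = XSL k q n i j := rfl
    rw [hx, hrX]
    by_cases hij : i = j
    · rw [if_pos hij, hij, hp1]
      rfl
    · rw [if_neg hij, map_zero]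
      exact ((RingQuot.mkAlgHom_rel k (TRel.zero hij)).trans (map_zero _)).symm
  have hli : Function.LeftInverse ⇑p ⇑R := fun x => AlgHom.congr_fun hpr x
  refine ⟨R, hrY, hli.injective, ?_, hpr⟩
  apply le_antisymm
  · rintro x ⟨y, rfl⟩
    obtain ⟨z, rfl⟩ := RingQuot.mkAlgHom_surjective k (TRel k q n) y
    obtain ⟨w, rfl⟩ := RingQuot.mkAlgHom_surjective k (SLRel k q n) z
    show R (RingQuot.mkAlgHom k (TRel k q n) (RingQuot.mkAlgHom k (SLRel k q n) w)) ∈ _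
    rw [hR, RingQuot.liftAlgHom_mkAlgHom_apply, RingQuot.liftAlgHom_mkAlgHom_apply]
    induction w using FreeAlgebra.induction with
    | grade0 a => rw [AlgHom.commutes]; exact Subalgebra.algebraMap_mem _ a
    | grade1 x =>
      obtain ⟨i, j⟩ := x
      rw [show FreeAlgebra.ι k (i, j) = Xf k n i j from rfl, hψι]
      by_cases hij : i = j
      · rw [if_pos hij]
        exact Algebra.subset_adjoin ⟨i, Or.inl rfl⟩
      · rw [if_neg hij]
        exact Subalgebra.zero_mem _
    | mul a b ha hb => rw [map_mul]; exact mul_mem ha hb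
    | add a b ha hb => rw [map_add]; exact add_mem ha hb
  · apply Algebra.adjoin_le
    rintro a ⟨i, rfl | rfl⟩
    · exact ⟨YT k q n i, hrY i⟩
    · have hc : ∀ x ∈ (List.ofFn fun j : Fin (n+1) => XBp k q n j j),
          ∀ y ∈ (List.ofFn fun j : Fin (n+1) => XBp k q n j j), Commute x y := by
        intro x hx y hy
        obtain ⟨a, rfl⟩ := List.mem_ofFn.1 hx
        obtain ⟨b, rfl⟩ := List.mem_ofFn.1 hy
        exact XBp_comm k q n a b
      obtain ⟨t, ht, hA, hB⟩ := list_pull (List.ofFn fun j : Fin (n+1) => XBp k q n j j)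
        (XBp k q n i i) (List.mem_ofFn.2 ⟨i, rfl⟩) hc
      rw [prod_diag_eq_one k q n] at hA hB
      have hu : Ring.inverse (XBp k q n i i) = t.prod :=
        Ring.inverse_unit ⟨XBp k q n i i, t.prod, hA.symm, hB.symm⟩
      rw [hu]
      refine list_prod_mem ?_
      intro x hx
      obtain ⟨j, rfl⟩ := List.mem_ofFn.1 (ht x hx)
      exact ⟨YT k q n j, hrY j⟩
end
end
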